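/- Let s be uniformly distributed on the unit sphere S² ⊂ ℝ³ and for fixed unit vectors a, b define A(s) = sign(a·s) and B(s) = −sign(b·s). Then the expectation E[A(s)B(s)] = −∫_{S²} sign(a·s) sign(b·s) dp(s) equals −1 + (2/π)η_{ab} for 0 ≤ η_{ab} ≤ π, where η_{ab} is the angle between a and b. -/

import Mathlib

open MeasureTheory Real Set Metric RealInnerProductSpace

section helpers

lemma measurable_rsign : Measurable Real.sign := by
  unfold Real.sign
  exact Measurable.ite measurableSet_Iio measurable_const
    (Measurable.ite measurableSet_Ioi measurable_const measurable_const)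

lemma rsign_mul_pos {r : ℝ} (hr : 0 < r) (x : ℝ) : Real.sign (r * x) = Real.sign x := by
  rcases lt_trichotomy x 0 with h | h | h
  · rw [Real.sign_of_neg h, Real.sign_of_neg (mul_neg_of_pos_of_neg hr h)]
  · simp [h]
  · rw [Real.sign_of_pos h, Real.sign_of_pos (mul_pos hr h)]

lemma abs_rsign_le_one (x : ℝ) : |Real.sign x| ≤ 1 := by
  unfold Real.sign
  split_ifs <;> norm_num

lemma ii_bdd {f : ℝ → ℝ} (hm : Measurable f) (hb : ∀ x, |f x| ≤ 1) (a b : ℝ) :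
    IntervalIntegrable f volume a b := by
  rw [intervalIntegrable_iff]
  refine Integrable.mono' (g := fun _ => (1:ℝ)) ?_ hm.aestronglyMeasurable ?_
  · exact integrableOn_const measure_Ioc_lt_top.ne
  · exact Filter.Eventually.of_forall fun x => by simpa using hb x

lemma piece {g : ℝ → ℝ} (hg : Measurable g) (hb : ∀ x, |g x| ≤ 1) {c d e : ℝ} (hcd : c ≤ d)
    (h : ∀ φ ∈ Ioo c d, g φ = e) : ∫ φ in c..d, g φ = e * (d - c) := by
  rw [intervalIntegral.integral_of_le hcd, MeasureTheory.integral_Ioc_eq_integral_Ioo,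
    setIntegral_congr_fun measurableSet_Ioo h, setIntegral_const, measureReal_def, Real.volume_Ioo,
    ENNReal.toReal_ofReal (by linarith), smul_eq_mul, mul_comm]

lemma cos_pos' {x : ℝ} (h1 : -(π/2) < x) (h2 : x < π/2) : 0 < Real.cos x :=
  Real.cos_pos_of_mem_Ioo ⟨h1, h2⟩

lemma cos_neg' {x : ℝ} (h1 : π/2 < x) (h2 : x < 3*π/2) : Real.cos x < 0 :=
  Real.cos_neg_of_pi_div_two_lt_of_lt h1 (by linarith)

lemma cos_neg'' {x : ℝ} (h1 : -(3*π/2) < x) (h2 : x < -(π/2)) : Real.cos x < 0 := by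
  rw [← Real.cos_neg]; exact cos_neg' (by linarith) (by linarith)

lemma cos_pos'' {x : ℝ} (h1 : -(2*π) < x) (h2 : x < -(3*π/2)) : 0 < Real.cos x := by
  have := Real.pi_pos
  rw [show x = (x + 2*π) - 2*π by ring, Real.cos_sub_two_pi]
  exact cos_pos' (by linarith) (by linarith)

lemma angular (θ : ℝ) (h0 : 0 ≤ θ) (hπ : θ ≤ π) :
    ∫ φ in (-π)..π, Real.sign (Real.cos φ) * Real.sign (Real.cos (φ - θ)) = 2*π - 4*θ := by
  have hπpos := Real.pi_pos
  set g : ℝ → ℝ := fun φ => Real.sign (Real.cos φ) * Real.sign (Real.cos (φ - θ)) with hgdef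
  have hg : Measurable g :=
    (measurable_rsign.comp Real.measurable_cos).mul
      (measurable_rsign.comp (Real.measurable_cos.comp (measurable_id.sub measurable_const)))
  have hbd : ∀ x, |g x| ≤ 1 := by
    intro x
    simp only [hgdef, abs_mul]
    exact mul_le_one₀ (abs_rsign_le_one _) (abs_nonneg _) (abs_rsign_le_one _)
  have II : ∀ c d : ℝ, IntervalIntegrable g volume c d := fun c d => ii_bdd hg hbd c d
  rcases le_or_gt θ (π/2) with hc | hc
  · -- θ ∈ [0, π/2]
    have split : ∫ φ in (-π)..π, g φ =
        (∫ φ in (-π)..(-(π/2)), g φ) + ((∫ φ in (-(π/2))..(θ - π/2), g φ) +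
          ((∫ φ in (θ - π/2)..(π/2), g φ) + ((∫ φ in (π/2)..(θ + π/2), g φ) +
            (∫ φ in (θ + π/2)..π, g φ)))) := by
      rw [intervalIntegral.integral_add_adjacent_intervals (II _ _) (II _ _),
        intervalIntegral.integral_add_adjacent_intervals (II _ _) (II _ _),
        intervalIntegral.integral_add_adjacent_intervals (II _ _) (II _ _),
        intervalIntegral.integral_add_adjacent_intervals (II _ _) (II _ _)]
    have P1 : ∫ φ in (-π)..(-(π/2)), g φ = 1 * (-(π/2) - (-π)) := by
      refine piece hg hbd (by linarith) fun φ ⟨u1, u2⟩ => ?_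
      show Real.sign (Real.cos φ) * Real.sign (Real.cos (φ - θ)) = _
      rw [Real.sign_of_neg (cos_neg'' (by linarith) (by linarith)),
        Real.sign_of_neg (cos_neg'' (by linarith) (by linarith))]
      norm_num
    have P2 : ∫ φ in (-(π/2))..(θ - π/2), g φ = (-1) * ((θ - π/2) - (-(π/2))) := by
      refine piece hg hbd (by linarith) fun φ ⟨u1, u2⟩ => ?_
      show Real.sign (Real.cos φ) * Real.sign (Real.cos (φ - θ)) = _
      rw [Real.sign_of_pos (cos_pos' (by linarith) (by linarith)),
        Real.sign_of_neg (cos_neg'' (by linarith) (by linarith))]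
      norm_num
    have P3 : ∫ φ in (θ - π/2)..(π/2), g φ = 1 * (π/2 - (θ - π/2)) := by
      refine piece hg hbd (by linarith) fun φ ⟨u1, u2⟩ => ?_
      show Real.sign (Real.cos φ) * Real.sign (Real.cos (φ - θ)) = _
      rw [Real.sign_of_pos (cos_pos' (by linarith) (by linarith)),
        Real.sign_of_pos (cos_pos' (by linarith) (by linarith))]
      norm_num
    have P4 : ∫ φ in (π/2)..(θ + π/2), g φ = (-1) * ((θ + π/2) - π/2) := by
      refine piece hg hbd (by linarith) fun φ ⟨u1, u2⟩ => ?_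
      show Real.sign (Real.cos φ) * Real.sign (Real.cos (φ - θ)) = _
      rw [Real.sign_of_neg (cos_neg' (by linarith) (by linarith)),
        Real.sign_of_pos (cos_pos' (by linarith) (by linarith))]
      norm_num
    have P5 : ∫ φ in (θ + π/2)..π, g φ = 1 * (π - (θ + π/2)) := by
      refine piece hg hbd (by linarith) fun φ ⟨u1, u2⟩ => ?_
      show Real.sign (Real.cos φ) * Real.sign (Real.cos (φ - θ)) = _
      rw [Real.sign_of_neg (cos_neg' (by linarith) (by linarith)),
        Real.sign_of_neg (cos_neg' (by linarith) (by linarith))]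
      norm_num
    rw [split, P1, P2, P3, P4, P5]; ring
  · -- θ ∈ (π/2, π]
    have split : ∫ φ in (-π)..π, g φ =
        (∫ φ in (-π)..(θ - 3*π/2), g φ) + ((∫ φ in (θ - 3*π/2)..(-(π/2)), g φ) +
          ((∫ φ in (-(π/2))..(θ - π/2), g φ) + ((∫ φ in (θ - π/2)..(π/2), g φ) +
            (∫ φ in (π/2)..π, g φ)))) := by
      rw [intervalIntegral.integral_add_adjacent_intervals (II _ _) (II _ _),
        intervalIntegral.integral_add_adjacent_intervals (II _ _) (II _ _),
        intervalIntegral.integral_add_adjacent_intervals (II _ _) (II _ _),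
        intervalIntegral.integral_add_adjacent_intervals (II _ _) (II _ _)]
    have P1 : ∫ φ in (-π)..(θ - 3*π/2), g φ = (-1) * ((θ - 3*π/2) - (-π)) := by
      refine piece hg hbd (by linarith) fun φ ⟨u1, u2⟩ => ?_
      show Real.sign (Real.cos φ) * Real.sign (Real.cos (φ - θ)) = _
      rw [Real.sign_of_neg (cos_neg'' (by linarith) (by linarith)),
        Real.sign_of_pos (cos_pos'' (by linarith) (by linarith))]
      norm_num
    have P2 : ∫ φ in (θ - 3*π/2)..(-(π/2)), g φ = 1 * ((-(π/2)) - (θ - 3*π/2)) := by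
      refine piece hg hbd (by linarith) fun φ ⟨u1, u2⟩ => ?_
      show Real.sign (Real.cos φ) * Real.sign (Real.cos (φ - θ)) = _
      rw [Real.sign_of_neg (cos_neg'' (by linarith) (by linarith)),
        Real.sign_of_neg (cos_neg'' (by linarith) (by linarith))]
      norm_num
    have P3 : ∫ φ in (-(π/2))..(θ - π/2), g φ = (-1) * ((θ - π/2) - (-(π/2))) := by
      refine piece hg hbd (by linarith) fun φ ⟨u1, u2⟩ => ?_
      show Real.sign (Real.cos φ) * Real.sign (Real.cos (φ - θ)) = _
      rw [Real.sign_of_pos (cos_pos' (by linarith) (by linarith)),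
        Real.sign_of_neg (cos_neg'' (by linarith) (by linarith))]
      norm_num
    have P4 : ∫ φ in (θ - π/2)..(π/2), g φ = 1 * (π/2 - (θ - π/2)) := by
      refine piece hg hbd (by linarith) fun φ ⟨u1, u2⟩ => ?_
      show Real.sign (Real.cos φ) * Real.sign (Real.cos (φ - θ)) = _
      rw [Real.sign_of_pos (cos_pos' (by linarith) (by linarith)),
        Real.sign_of_pos (cos_pos' (by linarith) (by linarith))]
      norm_num
    have P5 : ∫ φ in (π/2)..π, g φ = (-1) * (π - π/2) := by
      refine piece hg hbd (by linarith) fun φ ⟨u1, u2⟩ => ?_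
      show Real.sign (Real.cos φ) * Real.sign (Real.cos (φ - θ)) = _
      rw [Real.sign_of_neg (cos_neg' (by linarith) (by linarith)),
        Real.sign_of_pos (cos_pos' (by linarith) (by linarith))]
      norm_num
    rw [split, P1, P2, P3, P4, P5]; ring

lemma pipeline (f : ℝ → ℝ → ℝ)
    (hf : ∀ (r x y : ℝ), 0 < r → f (r * x) (r * y) = f x y) :
    ∫ y : EuclideanSpace ℝ (Fin 3), f (y 0) (y 1) * Real.exp (-‖y‖ ^ 2)
      = (∫ t : ℝ, Real.exp (-t ^ 2)) * ((∫ r in Ioi (0 : ℝ), r * Real.exp (-r ^ 2)) *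
          ∫ φ in Ioo (-π) π, f (Real.cos φ) (Real.sin φ)) := by
  have step1 : ∫ y : EuclideanSpace ℝ (Fin 3), f (y 0) (y 1) * Real.exp (-‖y‖ ^ 2)
      = ∫ z : Fin 3 → ℝ, f (z 0) (z 1) * Real.exp (-z 0 ^ 2) *
          (Real.exp (-z 1 ^ 2) * Real.exp (-z 2 ^ 2)) := by
    rw [← (EuclideanSpace.volume_preserving_symm_measurableEquiv_toLp (Fin 3)).symm _ |>.integral_comp
      (MeasurableEquiv.measurableEmbedding _)
      (fun y : EuclideanSpace ℝ (Fin 3) => f (y 0) (y 1) * Real.exp (-‖y‖ ^ 2))]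
    congr 1
    funext z
    have hcoord : ∀ i, (MeasurableEquiv.toLp 2 (Fin 3 → ℝ)).symm.symm z i = z i := by
      intro i; rfl
    have hnorm : ‖(MeasurableEquiv.toLp 2 (Fin 3 → ℝ)).symm.symm z‖ ^ 2
        = z 0 ^ 2 + z 1 ^ 2 + z 2 ^ 2 := by
      rw [EuclideanSpace.norm_eq]
      rw [Real.sq_sqrt (by positivity)]
      simp only [hcoord, Real.norm_eq_abs, sq_abs]
      rw [Fin.sum_univ_three]
    rw [hnorm, hcoord, hcoord]
    rw [show -(z 0 ^ 2 + z 1 ^ 2 + z 2 ^ 2) = (-z 0 ^ 2) + ((-z 1 ^ 2) + (-z 2 ^ 2)) by ring,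
      Real.exp_add, Real.exp_add]
    ring
  have step2 : ∫ z : Fin 3 → ℝ, f (z 0) (z 1) * Real.exp (-z 0 ^ 2) *
        (Real.exp (-z 1 ^ 2) * Real.exp (-z 2 ^ 2))
      = ∫ w : ℝ × (Fin 2 → ℝ), Real.exp (-w.1 ^ 2) *
          (f (w.2 0) (w.2 1) * Real.exp (-(w.2 0) ^ 2) * Real.exp (-(w.2 1) ^ 2)) := by
    rw [← ((volume_preserving_piFinSuccAbove (fun _ : Fin 3 => ℝ) 2).symm _).integral_comp
      (MeasurableEquiv.measurableEmbedding _)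
      (fun z : Fin 3 → ℝ => f (z 0) (z 1) * Real.exp (-z 0 ^ 2) *
        (Real.exp (-z 1 ^ 2) * Real.exp (-z 2 ^ 2)))]
    congr 1
    funext w
    have hsymm : ((MeasurableEquiv.piFinSuccAbove (fun _ : Fin 3 => ℝ) 2).symm w)
        = Fin.insertNth 2 w.1 w.2 := rfl
    have h2 : Fin.insertNth (α := fun _ : Fin 3 => ℝ) 2 w.1 w.2 2 = w.1 := by simp
    have e0 : (0 : Fin 3) = (2 : Fin 3).succAbove 0 := by decide
    have e1 : (1 : Fin 3) = (2 : Fin 3).succAbove 1 := by decide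
    have h0 : Fin.insertNth (α := fun _ : Fin 3 => ℝ) 2 w.1 w.2 0 = w.2 0 := by
      rw [e0, Fin.insertNth_apply_succAbove]
    have h1 : Fin.insertNth (α := fun _ : Fin 3 => ℝ) 2 w.1 w.2 1 = w.2 1 := by
      rw [e1, Fin.insertNth_apply_succAbove]
    rw [hsymm, h0, h1, h2]
    ring
  have step3 : ∫ w : ℝ × (Fin 2 → ℝ), Real.exp (-w.1 ^ 2) *
        (f (w.2 0) (w.2 1) * Real.exp (-(w.2 0) ^ 2) * Real.exp (-(w.2 1) ^ 2))
      = (∫ t : ℝ, Real.exp (-t ^ 2)) *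
          ∫ u : Fin 2 → ℝ, f (u 0) (u 1) * Real.exp (-(u 0) ^ 2) * Real.exp (-(u 1) ^ 2) := by
    rw [Measure.volume_eq_prod]
    exact integral_prod_mul (fun t : ℝ => Real.exp (-t ^ 2))
      (fun u : Fin 2 → ℝ => f (u 0) (u 1) * Real.exp (-(u 0) ^ 2) * Real.exp (-(u 1) ^ 2))
  have step4 : ∫ u : Fin 2 → ℝ, f (u 0) (u 1) * Real.exp (-(u 0) ^ 2) * Real.exp (-(u 1) ^ 2)
      = ∫ p : ℝ × ℝ, f p.1 p.2 * Real.exp (-p.1 ^ 2) * Real.exp (-p.2 ^ 2) := by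
    rw [← ((volume_preserving_finTwoArrow ℝ).symm _).integral_comp
      (MeasurableEquiv.measurableEmbedding _)
      (fun u : Fin 2 → ℝ => f (u 0) (u 1) * Real.exp (-(u 0) ^ 2) * Real.exp (-(u 1) ^ 2))]
    congr 1
  have step5 : ∫ p : ℝ × ℝ, f p.1 p.2 * Real.exp (-p.1 ^ 2) * Real.exp (-p.2 ^ 2)
      = (∫ r in Ioi (0 : ℝ), r * Real.exp (-r ^ 2)) *
          ∫ φ in Ioo (-π) π, f (Real.cos φ) (Real.sin φ) := by
    rw [← integral_comp_polarCoord_symm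
      (fun p : ℝ × ℝ => f p.1 p.2 * Real.exp (-p.1 ^ 2) * Real.exp (-p.2 ^ 2))]
    have htarget : polarCoord.target = Ioi (0 : ℝ) ×ˢ Ioo (-π) π := rfl
    rw [htarget]
    have hcong : Set.EqOn
        (fun q : ℝ × ℝ => q.1 • (f (polarCoord.symm q).1 (polarCoord.symm q).2 *
          Real.exp (-(polarCoord.symm q).1 ^ 2) * Real.exp (-(polarCoord.symm q).2 ^ 2)))
        (fun q : ℝ × ℝ => (q.1 * Real.exp (-q.1 ^ 2)) * f (Real.cos q.2) (Real.sin q.2))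
        (Ioi (0 : ℝ) ×ˢ Ioo (-π) π) := by
      rintro ⟨r, φ⟩ ⟨hr, hφ⟩
      have hrpos : (0:ℝ) < r := hr
      simp only [polarCoord_symm_apply, smul_eq_mul]
      have hexp : Real.exp (-(r * Real.cos φ) ^ 2) * Real.exp (-(r * Real.sin φ) ^ 2)
          = Real.exp (-r ^ 2) := by
        rw [← Real.exp_add]
        congr 1
        nlinarith [Real.sin_sq_add_cos_sq φ]
      rw [hf r _ _ hrpos, mul_assoc (f (Real.cos φ) (Real.sin φ)), hexp]
      ring
    rw [setIntegral_congr_fun (measurableSet_Ioi.prod measurableSet_Ioo) hcong,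
      Measure.volume_eq_prod]
    exact setIntegral_prod_mul (fun r : ℝ => r * Real.exp (-r ^ 2))
      (fun φ : ℝ => f (Real.cos φ) (Real.sin φ)) _ _
  rw [step1, step2, step3, step4, step5]

local notation "E3" => EuclideanSpace ℝ (Fin 3)

lemma radial_int :
    ∫ p : Ioi (0:ℝ), Real.exp (-(p:ℝ) ^ 2) ∂(Measure.volumeIoiPow 2)
      = ∫ r in Ioi (0:ℝ), r ^ 2 * Real.exp (-r ^ 2) := by
  simp only [Measure.volumeIoiPow, ENNReal.ofReal]
  rw [integral_withDensity_eq_integral_smul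
      ((measurable_subtype_coe.pow_const _).real_toNNReal),
    integral_subtype_comap measurableSet_Ioi
      (fun a : ℝ => Real.toNNReal (a ^ 2) • Real.exp (-a ^ 2)),
    setIntegral_congr_fun measurableSet_Ioi (fun x hx => ?_)]
  rw [NNReal.smul_def, Real.coe_toNNReal _ (by positivity)]
  rfl

lemma sphere_decomp (g : Metric.sphere (0 : E3) 1 → ℝ) (gE : E3 → ℝ)
    (hcomp : ∀ (s : Metric.sphere (0 : E3) 1) (r : ℝ), 0 < r →
      gE (r • (s : E3)) = g s) :
    ∫ x : E3, gE x * Real.exp (-‖x‖ ^ 2)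
      = (∫ s, g s ∂(volume : Measure E3).toSphere) *
        ∫ r in Ioi (0:ℝ), r ^ 2 * Real.exp (-r ^ 2) := by
  have hdim : Module.finrank ℝ E3 - 1 = 2 := by
    simp [finrank_euclideanSpace_fin]
  calc
    ∫ x : E3, gE x * Real.exp (-‖x‖ ^ 2)
        = ∫ x : ({0}ᶜ : Set E3), gE x.1 * Real.exp (-‖x.1‖ ^ 2)
            ∂((volume : Measure E3).comap Subtype.val) := by
          rw [integral_subtype_comap (measurableSet_singleton 0).compl
            (fun x => gE x * Real.exp (-‖x‖ ^ 2)), MeasureTheory.restrict_compl_singleton]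
    _ = ∫ p : Metric.sphere (0 : E3) 1 × Ioi (0:ℝ), g p.1 * Real.exp (-(p.2 : ℝ) ^ 2)
            ∂((volume : Measure E3).toSphere.prod
              (Measure.volumeIoiPow (Module.finrank ℝ E3 - 1))) := by
          rw [← (Measure.measurePreserving_homeomorphUnitSphereProd
            (volume : Measure E3)).integral_comp (Homeomorph.measurableEmbedding _)
            (fun p : Metric.sphere (0 : E3) 1 × Ioi (0:ℝ) =>
              g p.1 * Real.exp (-(p.2 : ℝ) ^ 2))]
          congr 1
          funext x
          have hx0 : x.1 ≠ 0 := x.2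
          have hnorm : (0:ℝ) < ‖x.1‖ := norm_pos_iff.2 hx0
          have h1 : ((homeomorphUnitSphereProd E3 x).2 : ℝ) = ‖x.1‖ := by simp
          have h2 : gE x.1 = g (homeomorphUnitSphereProd E3 x).1 := by
            have := hcomp (homeomorphUnitSphereProd E3 x).1 ‖x.1‖ hnorm
            rw [← this]
            congr 1
            simp only [homeomorphUnitSphereProd_apply_fst_coe, one_smul]
            rw [smul_inv_smul₀ (ne_of_gt hnorm)]
          rw [← h2, h1]
    _ = (∫ s, g s ∂(volume : Measure E3).toSphere) *
          ∫ p : Ioi (0:ℝ), Real.exp (-(p:ℝ) ^ 2)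
            ∂(Measure.volumeIoiPow (Module.finrank ℝ E3 - 1)) :=
          integral_prod_mul (fun s => g s) (fun r : Ioi (0:ℝ) => Real.exp (-(r:ℝ) ^ 2))
    _ = (∫ s, g s ∂(volume : Measure E3).toSphere) *
          ∫ r in Ioi (0:ℝ), r ^ 2 * Real.exp (-r ^ 2) := by
          rw [hdim, radial_int]

end helpers

open MeasureTheory RealInnerProductSpace

/-- The uniform (normalized, rotation-invariant) probability measure on the unit
sphere in `ℝ³`, obtained by normalizing the spherical part of Lebesgue measure. -/
noncomputable def sphereUniform :
    Measure (Metric.sphere (0 : EuclideanSpace ℝ (Fin 3)) 1) :=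
  ((volume : Measure (EuclideanSpace ℝ (Fin 3))).toSphere Set.univ)⁻¹ •
    (volume : Measure (EuclideanSpace ℝ (Fin 3))).toSphere

/-- for unit vectors `a, b` and `s` uniform on `S²`, with
`A(s) = sign(a·s)` and `B(s) = −sign(b·s)`, the expectation of `A(s)B(s)` equals
`−1 + (2/π)·η_{ab}`, where `η_{ab} = arccos(a·b)` is the angle between `a` and `b`. -/
theorem stmt19 (a b : EuclideanSpace ℝ (Fin 3)) (ha : ‖a‖ = 1) (hb : ‖b‖ = 1) :
    ∫ s : Metric.sphere (0 : EuclideanSpace ℝ (Fin 3)) 1,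
        Real.sign ⟪a, (s : EuclideanSpace ℝ (Fin 3))⟫ *
          (-Real.sign ⟪b, (s : EuclideanSpace ℝ (Fin 3))⟫) ∂sphereUniform =
      -1 + (2 / Real.pi) * Real.arccos ⟪a, b⟫ := by
  have hπ := Real.pi_pos
  set t : ℝ := ⟪a, b⟫ with ht
  set θ : ℝ := Real.arccos t with hθ
  have habs : |t| ≤ 1 := by
    calc |t| ≤ ‖a‖ * ‖b‖ := abs_real_inner_le_norm a b
      _ = 1 := by rw [ha, hb]; norm_num
  have ht1 : t ≤ 1 := (abs_le.1 habs).2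
  have ht2 : -1 ≤ t := (abs_le.1 habs).1
  have hθ0 : 0 ≤ θ := Real.arccos_nonneg t
  have hθπ : θ ≤ π := Real.arccos_le_pi t
  have hcos : Real.cos θ = t := Real.cos_arccos ht2 ht1
  have hsin_eq : Real.sin θ = Real.sqrt (1 - t ^ 2) := Real.sin_arccos t
  have hsin0 : 0 ≤ Real.sin θ := by rw [hsin_eq]; positivity
  have haa : ⟪a, a⟫ = (1:ℝ) := by
    rw [real_inner_self_eq_norm_mul_norm, ha]; norm_num
  have hbb : ⟪b, b⟫ = (1:ℝ) := by
    rw [real_inner_self_eq_norm_mul_norm, hb]; norm_num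
  set w : EuclideanSpace ℝ (Fin 3) := b - t • a with hwdef
  have hwa : ⟪a, w⟫ = 0 := by
    rw [hwdef, inner_sub_right, real_inner_smul_right, haa]; ring
  have hwnorm : ‖w‖ = Real.sin θ := by
    have h2 : ⟪w, w⟫ = 1 - t ^ 2 := by
      rw [hwdef]
      simp only [inner_sub_left, inner_sub_right, real_inner_smul_left, real_inner_smul_right,
        haa, hbb]
      have hba : ⟪b, a⟫ = t := by rw [real_inner_comm]
      rw [hba]
      ring
    have h3 : ‖w‖ ^ 2 = 1 - t ^ 2 := by
      rw [← real_inner_self_eq_norm_sq]; exact h2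
    rw [hsin_eq, ← h3, Real.sqrt_sq (norm_nonneg _)]
  -- a unit vector orthogonal to `a`
  have horth1 : Orthonormal ℝ (Set.restrict {0} (fun _ : Fin 3 => a)) := by
    rw [orthonormal_iff_ite]
    intro i j
    have hij : i = j := Subtype.ext (by
      have h1 := i.2; have h2 := j.2
      simp only [Set.mem_singleton_iff] at h1 h2
      rw [h1, h2])
    simp [hij, Set.restrict, haa, ha]
  obtain ⟨B₁, hB₁⟩ := horth1.exists_orthonormalBasis_extension_of_card_eq
    (by simp [finrank_euclideanSpace_fin])
  have hB₁0 : B₁ 0 = a := hB₁ 0 rfl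
  have hu1 : ‖B₁ 1‖ = 1 := B₁.orthonormal.1 1
  have hua : ⟪a, B₁ 1⟫ = 0 := by
    rw [← hB₁0]; exact B₁.orthonormal.2 (by decide : (0 : Fin 3) ≠ 1)
  obtain ⟨v, hv1, hva, hvdec⟩ :
      ∃ v : EuclideanSpace ℝ (Fin 3), ‖v‖ = 1 ∧ ⟪a, v⟫ = 0 ∧ b = t • a + Real.sin θ • v := by
    by_cases hw : w = 0
    · refine ⟨B₁ 1, hu1, hua, ?_⟩
      have hs0 : Real.sin θ = 0 := by rw [← hwnorm, hw, norm_zero]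
      have hb' : b = t • a := by
        have := sub_eq_zero.1 (hwdef ▸ hw)
        exact this
      rw [hs0, hb', zero_smul, add_zero]
    · have hwn : ‖w‖ ≠ 0 := norm_ne_zero_iff.2 hw
      refine ⟨‖w‖⁻¹ • w, ?_, ?_, ?_⟩
      · rw [norm_smul, norm_inv, norm_norm, inv_mul_cancel₀ hwn]
      · rw [real_inner_smul_right, hwa]; ring
      · rw [smul_smul, ← hwnorm, mul_inv_cancel₀ hwn, one_smul, hwdef]
        abel
  have hvv : ⟪v, v⟫ = (1:ℝ) := by
    rw [real_inner_self_eq_norm_mul_norm, hv1]; norm_num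
  have hav : ⟪v, a⟫ = 0 := by rw [real_inner_comm]; exact hva
  -- extend (a, v) to an orthonormal basis
  set f2 : Fin 3 → EuclideanSpace ℝ (Fin 3) := fun i => if i = 0 then a else v with hf2
  have horth2 : Orthonormal ℝ (Set.restrict {0, 1} f2) := by
    rw [orthonormal_iff_ite]
    rintro ⟨i, hi⟩ ⟨j, hj⟩
    simp only [Set.mem_insert_iff, Set.mem_singleton_iff] at hi hj
    rcases hi with rfl | rfl <;> rcases hj with rfl | rfl <;>
      simp [Set.restrict, hf2, haa, hvv, hva, hav, Subtype.ext_iff, ha, hv1]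
  obtain ⟨B, hB⟩ := horth2.exists_orthonormalBasis_extension_of_card_eq
    (by simp [finrank_euclideanSpace_fin])
  have hB0 : B 0 = a := by
    have := hB 0 (by simp)
    simpa [hf2] using this
  have hB1 : B 1 = v := by
    have := hB 1 (by simp)
    simpa [hf2] using this
  have key0 : ∀ x : EuclideanSpace ℝ (Fin 3), B.repr x 0 = ⟪a, x⟫ := by
    intro x; rw [B.repr_apply_apply, hB0]
  have key1 : ∀ x : EuclideanSpace ℝ (Fin 3), B.repr x 1 = ⟪v, x⟫ := by
    intro x; rw [B.repr_apply_apply, hB1]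
  have keyb : ∀ x : EuclideanSpace ℝ (Fin 3),
      ⟪b, x⟫ = t * B.repr x 0 + Real.sin θ * B.repr x 1 := by
    intro x
    rw [key0, key1, hvdec, inner_add_left, real_inner_smul_left, real_inner_smul_left]
  -- the function on the sphere and its homogeneous extensions
  set gS : Metric.sphere (0 : EuclideanSpace ℝ (Fin 3)) 1 → ℝ :=
    fun s => Real.sign ⟪a, (s : EuclideanSpace ℝ (Fin 3))⟫ *
      (-Real.sign ⟪b, (s : EuclideanSpace ℝ (Fin 3))⟫) with hgS
  set gE : EuclideanSpace ℝ (Fin 3) → ℝ :=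
    fun x => Real.sign ⟪a, x⟫ * (-Real.sign ⟪b, x⟫) with hgE
  set fθ : ℝ → ℝ → ℝ :=
    fun x y => Real.sign x * (-Real.sign (t * x + Real.sin θ * y)) with hfθ
  set M : ℝ := ((volume : Measure (EuclideanSpace ℝ (Fin 3))).toSphere Set.univ).toReal with hM
  set T : ℝ := ∫ s, gS s ∂(volume : Measure (EuclideanSpace ℝ (Fin 3))).toSphere with hT
  set C : ℝ := ∫ r in Ioi (0:ℝ), r ^ 2 * Real.exp (-r ^ 2) with hC
  set G1 : ℝ := ∫ x : ℝ, Real.exp (-x ^ 2) with hG1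
  set C2 : ℝ := ∫ r in Ioi (0:ℝ), r * Real.exp (-r ^ 2) with hC2
  have eq1 : ∫ s, gS s ∂sphereUniform = M⁻¹ * T := by
    rw [sphereUniform, integral_smul_measure, ENNReal.toReal_inv, smul_eq_mul]
  have hcomp : ∀ (s : Metric.sphere (0 : EuclideanSpace ℝ (Fin 3)) 1) (r : ℝ), 0 < r →
      gE (r • (s : EuclideanSpace ℝ (Fin 3))) = gS s := by
    intro s r hr
    simp only [hgE, hgS]
    rw [real_inner_smul_right, real_inner_smul_right, rsign_mul_pos hr, rsign_mul_pos hr]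
  have eq2 : ∫ x : EuclideanSpace ℝ (Fin 3), gE x * Real.exp (-‖x‖ ^ 2) = T * C :=
    sphere_decomp gS gE hcomp
  have eq2' : ∫ x : EuclideanSpace ℝ (Fin 3), Real.exp (-‖x‖ ^ 2) = M * C := by
    have h := sphere_decomp (fun _ => (1:ℝ)) (fun _ => (1:ℝ)) (fun _ _ _ => rfl)
    simp only [one_mul] at h
    rwa [integral_const, smul_eq_mul, mul_one] at h
  have eq3 : ∫ x : EuclideanSpace ℝ (Fin 3), gE x * Real.exp (-‖x‖ ^ 2)
      = ∫ y : EuclideanSpace ℝ (Fin 3), fθ (y 0) (y 1) * Real.exp (-‖y‖ ^ 2) := by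
    rw [← (B.measurePreserving_repr_symm).integral_comp
      (B.repr.symm.toHomeomorph.measurableEmbedding)
      (fun x : EuclideanSpace ℝ (Fin 3) => gE x * Real.exp (-‖x‖ ^ 2))]
    congr 1
    funext y
    have hsymm : B.repr (B.repr.symm y) = y := B.repr.apply_symm_apply y
    have hy0 : ⟪a, B.repr.symm y⟫ = y 0 := by rw [← key0, hsymm]
    have hyb : ⟪b, B.repr.symm y⟫ = t * y 0 + Real.sin θ * y 1 := by rw [keyb, hsymm]
    have hn : ‖B.repr.symm y‖ = ‖y‖ := B.repr.symm.norm_map y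
    simp only [hgE, hfθ]
    rw [hy0, hyb, hn]
  have hom : ∀ (r x y : ℝ), 0 < r → fθ (r * x) (r * y) = fθ x y := by
    intro r x y hr
    simp only [hfθ]
    rw [rsign_mul_pos hr, show t * (r * x) + Real.sin θ * (r * y)
      = r * (t * x + Real.sin θ * y) by ring, rsign_mul_pos hr]
  have eq4 : ∫ y : EuclideanSpace ℝ (Fin 3), fθ (y 0) (y 1) * Real.exp (-‖y‖ ^ 2)
      = G1 * (C2 * ∫ φ in Ioo (-π) π, fθ (Real.cos φ) (Real.sin φ)) := pipeline fθ hom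
  have eq4' : ∫ y : EuclideanSpace ℝ (Fin 3), Real.exp (-‖y‖ ^ 2) = G1 * (C2 * (2 * π)) := by
    have h := pipeline (fun _ _ => (1:ℝ)) (fun _ _ _ _ => rfl)
    simp only [one_mul] at h
    have h2 : ∫ _φ in Ioo (-π) π, (1:ℝ) = 2 * π := by
      rw [setIntegral_const, measureReal_def, Real.volume_Ioo, ENNReal.toReal_ofReal (by linarith),
        smul_eq_mul]
      ring
    rwa [h2] at h
  have eq5 : (∫ φ in Ioo (-π) π, fθ (Real.cos φ) (Real.sin φ)) = 4 * θ - 2 * π := by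
    have hτ : ∀ φ : ℝ, fθ (Real.cos φ) (Real.sin φ)
        = -(Real.sign (Real.cos φ) * Real.sign (Real.cos (φ - θ))) := by
      intro φ
      simp only [hfθ]
      rw [show t * Real.cos φ + Real.sin θ * Real.sin φ = Real.cos (φ - θ) by
        rw [Real.cos_sub, ← hcos]; ring]
      ring
    calc (∫ φ in Ioo (-π) π, fθ (Real.cos φ) (Real.sin φ))
        = ∫ φ in Ioo (-π) π, -(Real.sign (Real.cos φ) * Real.sign (Real.cos (φ - θ))) := by
          simp only [hτ]
      _ = -∫ φ in Ioo (-π) π, Real.sign (Real.cos φ) * Real.sign (Real.cos (φ - θ)) :=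
          integral_neg _
      _ = -∫ φ in (-π)..π, Real.sign (Real.cos φ) * Real.sign (Real.cos (φ - θ)) := by
          rw [intervalIntegral.integral_of_le (by linarith), integral_Ioc_eq_integral_Ioo]
      _ = 4 * θ - 2 * π := by rw [angular θ hθ0 hθπ]; ring
  have eqTC : T * C = G1 * (C2 * (4 * θ - 2 * π)) := by
    rw [← eq2, eq3, eq4, eq5]
  have eqMC : M * C = G1 * (C2 * (2 * π)) := by
    rw [← eq2', eq4']
  have hCpos : 0 < C := by
    have hInt : IntegrableOn (fun r : ℝ => r ^ 2 * Real.exp (-r ^ 2)) (Ioi 0) := by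
      have h := integrableOn_rpow_mul_exp_neg_mul_sq (b := 1) one_pos
        (s := 2) (by norm_num)
      refine h.congr_fun (fun x hx => ?_) measurableSet_Ioi
      beta_reduce
      rw [show (2:ℝ) = ((2:ℕ):ℝ) by norm_num, Real.rpow_natCast]
      norm_num
    rw [hC]
    rw [setIntegral_pos_iff_support_of_nonneg_ae]
    · have hsub : Ioi (0:ℝ) ⊆ Function.support (fun r : ℝ => r ^ 2 * Real.exp (-r ^ 2)) := by
        intro x hx
        have hx' : (0:ℝ) < x := hx
        have : 0 < x ^ 2 * Real.exp (-x ^ 2) := by positivity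
        exact this.ne'
      rw [Set.inter_eq_right.2 hsub, Real.volume_Ioi]
      norm_num
    · filter_upwards [ae_restrict_mem measurableSet_Ioi] with x hx
      positivity
    · exact hInt
  have hM0 : ((volume : Measure (EuclideanSpace ℝ (Fin 3))).toSphere Set.univ) ≠ 0 := by
    rw [Measure.toSphere_apply_univ]
    refine mul_ne_zero (by simp [finrank_euclideanSpace_fin]) ?_
    exact (measure_ball_pos _ _ one_pos).ne'
  have hMtop : ((volume : Measure (EuclideanSpace ℝ (Fin 3))).toSphere Set.univ) ≠ ⊤ :=
    measure_ne_top _ _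
  have hMpos : 0 < M := ENNReal.toReal_pos hM0 hMtop
  have hkey : T * (2 * π) = M * (4 * θ - 2 * π) := by
    have hside : (T * (2 * π)) * C = (M * (4 * θ - 2 * π)) * C := by
      linear_combination (2 * π) * eqTC - (4 * θ - 2 * π) * eqMC
    exact mul_right_cancel₀ (ne_of_gt hCpos) hside
  rw [eq1, inv_mul_eq_div, div_eq_iff hMpos.ne']
  have h2π : (2 * π) ≠ 0 := by positivity
  refine mul_right_cancel₀ h2π ?_
  rw [hkey]
  field_simp
  ring
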